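/- If α > 0 and 1/2 < p ≤ 1, then the average wrong-action probability g is strictly decreasing on (−∞, 5/2] and strictly increasing on [5/2, ∞). -/

import Mathlib

/-- The logistic sigmoid σ(z) = 1/(1 + e^{−z}). -/
noncomputable def sig (z : ℝ) : ℝ := 1 / (1 + Real.exp (-z))

/-- μ_φ(s) = σ(α(s − φ)), the soft decision node with steepness α and threshold φ. -/
noncomputable def mu (α φ s : ℝ) : ℝ := sig (α * (s - φ))

/-- Probability that the soft decision-tree policy with exploitation parameter p
selects action a2 in state s: π_φ(s, a2) = μ_φ(s)·p + (1 − μ_φ(s))·(1 − p).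
(The probability of a1 is the complement.) -/
noncomputable def piA2 (α p φ s : ℝ) : ℝ := mu α φ s * p + (1 - mu α φ s) * (1 - p)

/-- Average wrong-action probability g(φ) = ½(π_φ(2, a2) + π_φ(3, a1)), where the
wrong actions are a2 in state 2 and a1 in state 3, and π_φ(3, a1) = 1 − π_φ(3, a2). -/
noncomputable def g (α p φ : ℝ) : ℝ := (1 / 2) * (piA2 α p φ 2 + (1 - piA2 α p φ 3))

/-- The derivative of the sigmoid, written symmetrically. -/
noncomputable def Dsig (z : ℝ) : ℝ := (2 + Real.exp z + Real.exp (-z))⁻¹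

lemma Dsig_denom_pos (z : ℝ) : 0 < 2 + Real.exp z + Real.exp (-z) := by
  have := Real.exp_pos z; have := Real.exp_pos (-z); linarith

lemma hasDerivAt_sig (z : ℝ) : HasDerivAt sig (Dsig z) z := by
  have h1 : HasDerivAt (fun z : ℝ => 1 + Real.exp (-z)) (-Real.exp (-z)) z := by
    have := ((Real.hasDerivAt_exp (-z)).comp z (hasDerivAt_neg z)).const_add 1
    simpa using this
  have hne : (1 + Real.exp (-z)) ≠ 0 := by
    have := Real.exp_pos (-z); linarith
  have h2 := h1.inv hne
  have hexp : Real.exp (-z) * Real.exp z = 1 := by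
    rw [← Real.exp_add]; simp
  have heq : -(-Real.exp (-z)) / (1 + Real.exp (-z)) ^ 2 = Dsig z := by
    rw [neg_neg, Dsig, div_eq_iff (pow_ne_zero 2 hne),
      inv_mul_eq_div, eq_div_iff (ne_of_gt (Dsig_denom_pos z))]
    nlinarith [hexp]
  have : sig = fun z : ℝ => (1 + Real.exp (-z))⁻¹ := by
    funext w; simp [sig, one_div]
  rw [this, ← heq]
  exact h2

lemma Dsig_lt_Dsig {u v : ℝ} (h : |u| < |v|) : Dsig v < Dsig u := by
  have hc : Real.cosh u < Real.cosh v := Real.cosh_lt_cosh.2 h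
  have hu : Real.exp u + Real.exp (-u) = 2 * Real.cosh u := by
    rw [Real.cosh_eq]; ring
  have hv : Real.exp v + Real.exp (-v) = 2 * Real.cosh v := by
    rw [Real.cosh_eq]; ring
  have : 2 + Real.exp u + Real.exp (-u) < 2 + Real.exp v + Real.exp (-v) := by
    nlinarith
  exact inv_strictAnti₀ (Dsig_denom_pos u) this

lemma hasDerivAt_g (α p φ : ℝ) :
    HasDerivAt (g α p)
      (((2 * p - 1) / 2) * α * (Dsig (α * (3 - φ)) - Dsig (α * (2 - φ)))) φ := by
  have hfun : g α p = fun φ =>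
      1 / 2 + ((2 * p - 1) / 2) * (sig (α * (2 - φ)) - sig (α * (3 - φ))) := by
    funext w; simp only [g, piA2, mu]; ring
  have inner : ∀ s : ℝ, HasDerivAt (fun φ : ℝ => α * (s - φ)) (-α) φ := by
    intro s
    simpa using ((hasDerivAt_id φ).const_sub s).const_mul α
  have h2 : HasDerivAt (fun φ : ℝ => sig (α * (2 - φ))) (Dsig (α * (2 - φ)) * (-α)) φ :=
    by have := (hasDerivAt_sig (α * (2 - φ))).comp φ (inner 2); exact this
  have h3 : HasDerivAt (fun φ : ℝ => sig (α * (3 - φ))) (Dsig (α * (3 - φ)) * (-α)) φ :=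
    by have := (hasDerivAt_sig (α * (3 - φ))).comp φ (inner 3); exact this
  have := (((h2.sub h3).const_mul ((2 * p - 1) / 2)).const_add (1 / 2))
  rw [hfun]
  refine this.congr_deriv ?_
  ring

/-- if α > 0 and 1/2 < p ≤ 1, then the average wrong-action
probability g is strictly decreasing on (−∞, 5/2] and strictly increasing on
[5/2, ∞). -/
theorem stmt10 (α p : ℝ) (hα : 0 < α) (hp1 : 1 / 2 < p) (hp2 : p ≤ 1) :
    StrictAntiOn (g α p) (Set.Iic (5 / 2 : ℝ)) ∧
    StrictMonoOn (g α p) (Set.Ici (5 / 2 : ℝ)) := by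
  have hdiff : Differentiable ℝ (g α p) := fun φ => (hasDerivAt_g α p φ).differentiableAt
  have hderiv : ∀ φ, deriv (g α p) φ =
      ((2 * p - 1) / 2) * α * (Dsig (α * (3 - φ)) - Dsig (α * (2 - φ))) :=
    fun φ => (hasDerivAt_g α p φ).deriv
  have hcoef : 0 < (2 * p - 1) / 2 * α := by
    have : 0 < 2 * p - 1 := by linarith
    positivity
  constructor
  · apply strictAntiOn_of_deriv_neg (convex_Iic _) hdiff.continuous.continuousOn
    intro x hx
    rw [interior_Iic] at hx
    have hx' : x < 5 / 2 := hx
    rw [hderiv]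
    have habs : |α * (2 - x)| < |α * (3 - x)| := by
      rw [abs_mul, abs_mul, abs_of_pos hα]
      have h3 : |(3 : ℝ) - x| = 3 - x := abs_of_pos (by linarith)
      rw [h3]
      have : |(2 : ℝ) - x| < 3 - x := by
        rw [abs_lt]; constructor <;> linarith
      nlinarith
    have hD := Dsig_lt_Dsig habs
    have : Dsig (α * (3 - x)) - Dsig (α * (2 - x)) < 0 := by linarith
    exact mul_neg_of_pos_of_neg hcoef this
  · apply strictMonoOn_of_deriv_pos (convex_Ici _) hdiff.continuous.continuousOn
    intro x hx
    rw [interior_Ici] at hx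
    have hx' : (5 / 2 : ℝ) < x := hx
    rw [hderiv]
    have habs : |α * (3 - x)| < |α * (2 - x)| := by
      rw [abs_mul, abs_mul, abs_of_pos hα]
      have h2 : |(2 : ℝ) - x| = x - 2 := by
        rw [abs_of_nonpos (by linarith)]; ring
      rw [h2]
      have : |(3 : ℝ) - x| < x - 2 := by
        rw [abs_lt]; constructor <;> linarith
      nlinarith
    have hD := Dsig_lt_Dsig habs
    have : 0 < Dsig (α * (3 - x)) - Dsig (α * (2 - x)) := by linarith
    exact mul_pos hcoef this
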